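/- Let Γ = diag(σ_1², …, σ_n²) with σ_1 ≥ ⋯ ≥ σ_n ≥ 0 and σ_p > 0. For any X ∈ ℝ^{n×p} of full column rank, det(XᵀΓX)/det(XᵀX) ≤ ∏_{i=1}^p σ_i², with equality if range(X) equals the span of the first p standard basis vectors. -/

import Mathlib

open Matrix Finset

/-- Monotone enumeration of a `p`-element subset of `Fin n` (junk value otherwise). -/
noncomputable def monoEnum {n p : ℕ} (hpn : p ≤ n) (hp : 0 < p) (S : Finset (Fin n)) :
    Fin p → Fin n :=
  if h : S.card = p then S.orderEmbOfFin h else fun _ => ⟨0, lt_of_lt_of_le hp hpn⟩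

lemma monoEnum_eq {n p : ℕ} (hpn : p ≤ n) (hp : 0 < p) {S : Finset (Fin n)} (h : S.card = p) :
    monoEnum hpn hp S = S.orderEmbOfFin h := by simp [monoEnum, h]

lemma step1 {n p : ℕ} (w : Fin n → ℝ) (X : Matrix (Fin n) (Fin p) ℝ) :
    (Xᵀ * Matrix.diagonal w * X).det =
      ∑ f : Fin p → Fin n, (∏ i, w (f i) * X (f i) i) * (X.submatrix f id).det := by
  have hM : (Xᵀ * Matrix.diagonal w * X) = fun i => ∑ k : Fin n, (w k * X k i) • (X k) := by
    ext i j
    simp [Matrix.mul_apply, Finset.sum_apply, mul_comm, mul_assoc, mul_left_comm,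
      Matrix.diagonal_apply, Finset.mul_sum]
  have key := (Matrix.detRowAlternating (R := ℝ) (n := Fin p)).toMultilinearMap.map_sum
    (g := fun i k => (w k * X k i) • (X k))
  simp only [AlternatingMap.coe_multilinearMap] at key
  show Matrix.detRowAlternating _ = _
  rw [hM]
  rw [key]
  refine Finset.sum_congr rfl fun f _ => ?_
  have := (Matrix.detRowAlternating (R := ℝ) (n := Fin p)).toMultilinearMap.map_smul_univ
    (fun i => w (f i) * X (f i) i) (fun i => X (f i))
  simp only [AlternatingMap.coe_multilinearMap] at this
  rw [this]
  rw [smul_eq_mul]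
  congr 1

lemma sum_inj {n p : ℕ} (hpn : p ≤ n) (hp : 0 < p) (F : (Fin p → Fin n) → ℝ) :
    ∑ f ∈ univ.filter (fun f : Fin p → Fin n => Function.Injective f), F f
      = ∑ S ∈ univ.powersetCard p, ∑ e : Equiv.Perm (Fin p), F (monoEnum hpn hp S ∘ e) := by
  rw [← Finset.sum_sigma (univ.powersetCard p) (fun _ => (univ : Finset (Equiv.Perm (Fin p))))
    (fun x => F (monoEnum hpn hp x.1 ∘ x.2))]
  refine (Finset.sum_bij (fun (x : Σ _ : Finset (Fin n), Equiv.Perm (Fin p)) _ =>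
    monoEnum hpn hp x.1 ∘ x.2) ?_ ?_ ?_ ?_).symm
  · rintro ⟨S, e⟩ hx
    simp only [Finset.mem_sigma, Finset.mem_powersetCard_univ, Finset.mem_univ, and_true] at hx
    show monoEnum hpn hp S ∘ e ∈ _
    rw [monoEnum_eq hpn hp hx]
    simp only [Finset.mem_filter, Finset.mem_univ, true_and]
    exact ((S.orderEmbOfFin hx).injective).comp e.injective
  · rintro ⟨S₁, e₁⟩ h₁ ⟨S₂, e₂⟩ h₂ heq
    simp only [Finset.mem_sigma, Finset.mem_powersetCard_univ, Finset.mem_univ, and_true] at h₁ h₂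
    dsimp only at heq
    rw [monoEnum_eq hpn hp h₁, monoEnum_eq hpn hp h₂] at heq
    have himg : S₁ = S₂ := by
      have r1 : Set.range (S₁.orderEmbOfFin h₁ ∘ e₁) = ↑S₁ := by
        rw [Set.range_comp, e₁.range_eq_univ, Set.image_univ, Finset.range_orderEmbOfFin]
      have r2 : Set.range (S₂.orderEmbOfFin h₂ ∘ e₂) = ↑S₂ := by
        rw [Set.range_comp, e₂.range_eq_univ, Set.image_univ, Finset.range_orderEmbOfFin]
      have := r1.symm.trans (by rw [heq, r2])
      exact_mod_cast Finset.coe_injective this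
    subst himg
    have he : e₁ = e₂ := by
      ext i
      have := congrFun heq i
      exact congrArg Fin.val ((S₁.orderEmbOfFin h₁).injective this)
    rw [he]
  · intro f hf
    simp only [Finset.mem_filter, Finset.mem_univ, true_and] at hf
    set S : Finset (Fin n) := Finset.image f univ with hS
    have hcard : S.card = p := by
      rw [hS, Finset.card_image_of_injective _ hf, Finset.card_univ, Fintype.card_fin]
    have hmem : ∀ i, f i ∈ S := fun i => Finset.mem_image_of_mem f (Finset.mem_univ i)
    set e0 : Fin p → Fin p := fun i => (S.orderIsoOfFin hcard).symm ⟨f i, hmem i⟩ with he0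
    have he0inj : Function.Injective e0 := by
      intro a b hab
      exact hf (congrArg Subtype.val ((S.orderIsoOfFin hcard).symm.injective hab))
    have he0bij : Function.Bijective e0 := (Finite.injective_iff_bijective).mp he0inj
    refine ⟨⟨S, Equiv.ofBijective e0 he0bij⟩, ?_, ?_⟩
    · simp [Finset.mem_sigma, Finset.mem_powersetCard_univ, hcard]
    · show monoEnum hpn hp S ∘ (Equiv.ofBijective e0 he0bij) = f
      rw [monoEnum_eq hpn hp hcard]
      funext i
      simp only [Function.comp_apply, Equiv.ofBijective_apply, he0]
      have : S.orderEmbOfFin hcard ((S.orderIsoOfFin hcard).symm ⟨f i, hmem i⟩)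
          = ((S.orderIsoOfFin hcard) ((S.orderIsoOfFin hcard).symm ⟨f i, hmem i⟩) : Fin n) := rfl
      rw [this, OrderIso.apply_symm_apply]
  · intros; rfl

lemma prod_over {n p : ℕ} (hpn : p ≤ n) (hp : 0 < p) {S : Finset (Fin n)} (h : S.card = p)
    (w : Fin n → ℝ) : ∏ k ∈ S, w k = ∏ i : Fin p, w (monoEnum hpn hp S i) := by
  rw [monoEnum_eq hpn hp h]
  have himg : Finset.image (S.orderEmbOfFin h) univ = S := by
    apply Finset.coe_injective
    rw [Finset.coe_image, Finset.coe_univ, Set.image_univ, Finset.range_orderEmbOfFin]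
  conv_lhs => rw [← himg]
  exact Finset.prod_image (fun a _ b _ hab => (S.orderEmbOfFin h).injective hab)

/-- Cauchy–Binet style expansion of `det (Xᵀ D X)` for diagonal `D`. -/
lemma detw {n p : ℕ} (hpn : p ≤ n) (hp : 0 < p) (w : Fin n → ℝ)
    (X : Matrix (Fin n) (Fin p) ℝ) :
    (Xᵀ * Matrix.diagonal w * X).det
      = ∑ S ∈ univ.powersetCard p,
          (∏ k ∈ S, w k) * (X.submatrix (monoEnum hpn hp S) id).det ^ 2 := by
  rw [step1]
  rw [show (∑ f : Fin p → Fin n, (∏ i, w (f i) * X (f i) i) * (X.submatrix f id).det)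
      = ∑ f ∈ univ.filter (fun f : Fin p → Fin n => Function.Injective f),
          (∏ i, w (f i) * X (f i) i) * (X.submatrix f id).det from
    (Finset.sum_subset (Finset.filter_subset _ _) (fun f _ hf => by
      simp only [Finset.mem_filter, Finset.mem_univ, true_and] at hf
      rw [Function.not_injective_iff] at hf
      obtain ⟨a, b, hab, hne⟩ := hf
      have : (X.submatrix f id).det = 0 := by
        apply Matrix.det_zero_of_row_eq hne
        funext j
        simp [Matrix.submatrix_apply, hab]
      rw [this, mul_zero])).symm]
  rw [sum_inj hpn hp]
  refine Finset.sum_congr rfl fun S hS => ?_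
  rw [Finset.mem_powersetCard_univ] at hS
  set g := monoEnum hpn hp S with hg
  set D := (X.submatrix g id).det with hD
  have hterm : ∀ e : Equiv.Perm (Fin p),
      (∏ i, w ((g ∘ e) i) * X ((g ∘ e) i) i) * (X.submatrix (g ∘ e) id).det
        = (∏ k ∈ S, w k) * D * ((Equiv.Perm.sign e : ℝ) * ∏ i, X (g (e i)) i) := by
    intro e
    have h1 : (∏ i, w ((g ∘ e) i) * X ((g ∘ e) i) i)
        = (∏ i, w (g (e i))) * ∏ i, X (g (e i)) i := by
      rw [← Finset.prod_mul_distrib]; rfl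
    have h2 : (∏ i, w (g (e i))) = ∏ k ∈ S, w k := by
      rw [prod_over hpn hp hS w, ← hg]
      exact Equiv.prod_comp e (fun i => w (g i))
    have h3 : (X.submatrix (g ∘ e) id).det = (Equiv.Perm.sign e : ℝ) * D := by
      have : X.submatrix (g ∘ e) id = (X.submatrix g id).submatrix e id := by
        rw [Matrix.submatrix_submatrix]; rfl
      rw [this, Matrix.det_permute, hD]
    rw [h1, h2, h3]; ring
  rw [Finset.sum_congr rfl (fun e _ => hterm e), ← Finset.mul_sum]
  have hdet : ∑ e : Equiv.Perm (Fin p), (Equiv.Perm.sign e : ℝ) * ∏ i, X (g (e i)) i = D := by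
    rw [hD, Matrix.det_apply']
    rfl
  rw [hdet]; ring

lemma le_orderEmb {n p : ℕ} {g : Fin p → Fin n} (hg : StrictMono g) :
    ∀ i : Fin p, (i : ℕ) ≤ (g i : ℕ) := by
  have key : ∀ m : ℕ, ∀ hm : m < p, m ≤ (g ⟨m, hm⟩ : ℕ) := by
    intro m
    induction m with
    | zero => intro _; exact Nat.zero_le _
    | succ k ih =>
      intro hm
      have hk : k < p := lt_trans (Nat.lt_succ_self k) hm
      have h1 := ih hk
      have h2 : g ⟨k, hk⟩ < g ⟨k + 1, hm⟩ := hg (by simp [Fin.lt_def])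
      have h3 : (g ⟨k, hk⟩ : ℕ) < (g ⟨k + 1, hm⟩ : ℕ) := h2
      omega
  intro i
  exact key i i.isLt

/-- With `Γ = diag(σ₁²,…,σ_n²)`, `σ` nonincreasing nonnegative with `σ_p > 0`
(0-indexed: `σ` at index `p-1` positive), any full-column-rank `X` satisfies
`det(XᵀΓX)/det(XᵀX) ≤ ∏_{i<p} σ_i²`, with equality if `range(X)` is the span of
the first `p` standard basis vectors. -/
theorem stmt_6 {n p : ℕ} (hpn : p ≤ n) (hp : 0 < p) (σ : Fin n → ℝ)
    (hmono : ∀ i j : Fin n, i ≤ j → σ j ≤ σ i) (hσ0 : ∀ i, 0 ≤ σ i)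
    (i₁ : Fin n) (hi₁ : (i₁ : ℕ) = p - 1) (hpos : 0 < σ i₁)
    (Γ : Matrix (Fin n) (Fin n) ℝ) (hΓ : Γ = Matrix.diagonal fun i => σ i ^ 2)
    (X : Matrix (Fin n) (Fin p) ℝ) (hX : X.rank = p) :
    (Xᵀ * Γ * X).det / (Xᵀ * X).det
        ≤ ∏ i ∈ Finset.univ.filter (fun i : Fin n => (i : ℕ) < p), σ i ^ 2
    ∧ (LinearMap.range X.mulVecLin
          = Submodule.span ℝ (Set.range fun i : Fin p =>
              (Pi.single (Fin.castLE hpn i) 1 : Fin n → ℝ)) →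
        (Xᵀ * Γ * X).det / (Xᵀ * X).det
          = ∏ i ∈ Finset.univ.filter (fun i : Fin n => (i : ℕ) < p), σ i ^ 2) := by
  classical
  -- notation
  set F₀ : Finset (Fin n) := Finset.univ.filter (fun i : Fin n => (i : ℕ) < p) with hF₀
  have hF₀img : Finset.image (Fin.castLE hpn) univ = F₀ := by
    ext x
    simp only [Finset.mem_image, Finset.mem_univ, true_and, hF₀, Finset.mem_filter]
    constructor
    · rintro ⟨i, rfl⟩; exact i.isLt
    · intro hx; exact ⟨⟨(x : ℕ), hx⟩, by ext; rfl⟩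
  have hF₀card : F₀.card = p := by
    rw [← hF₀img, Finset.card_image_of_injective _ (Fin.castLE_injective hpn),
      Finset.card_univ, Fintype.card_fin]
  set C : ℝ := ∏ i ∈ F₀, σ i ^ 2 with hC
  have hCnn : 0 ≤ C := Finset.prod_nonneg fun i _ => sq_nonneg _
  -- the two determinant expansions
  have hΓdet : (Xᵀ * Γ * X).det = ∑ S ∈ univ.powersetCard p,
      (∏ k ∈ S, σ k ^ 2) * (X.submatrix (monoEnum hpn hp S) id).det ^ 2 := by
    rw [hΓ]; exact detw hpn hp _ X
  have hIdet : (Xᵀ * X).det = ∑ S ∈ univ.powersetCard p,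
      (X.submatrix (monoEnum hpn hp S) id).det ^ 2 := by
    have h1 : Xᵀ * X = Xᵀ * Matrix.diagonal (fun _ : Fin n => (1 : ℝ)) * X := by
      rw [Matrix.diagonal_one, Matrix.mul_one]
    rw [h1, detw hpn hp]
    exact Finset.sum_congr rfl fun S _ => by rw [Finset.prod_const_one, one_mul]
  -- key product bound
  have hprodle : ∀ S ∈ univ.powersetCard p, (∏ k ∈ S, σ k ^ 2) ≤ C := by
    intro S hS
    rw [Finset.mem_powersetCard_univ] at hS
    rw [prod_over hpn hp hS, hC, prod_over hpn hp hF₀card]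
    refine Finset.prod_le_prod (fun i _ => sq_nonneg _) (fun i _ => ?_)
    have h1 : monoEnum hpn hp F₀ i = Fin.castLE hpn i := by
      rw [monoEnum_eq hpn hp hF₀card]
      have := Finset.orderEmbOfFin_unique (f := Fin.castLE hpn) hF₀card
        (fun x => by simp [hF₀]) (Fin.strictMono_castLE hpn)
      exact (congrFun this i).symm
    have h2 : Fin.castLE hpn i ≤ monoEnum hpn hp S i := by
      have hsm : StrictMono (monoEnum hpn hp S) := by
        rw [monoEnum_eq hpn hp hS]; exact (S.orderEmbOfFin hS).strictMono
      have := le_orderEmb hsm i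
      rw [Fin.le_def]
      simpa using this
    have h3 : σ (monoEnum hpn hp S i) ≤ σ (Fin.castLE hpn i) := hmono _ _ h2
    rw [h1]
    exact pow_le_pow_left₀ (hσ0 _) h3 2
  -- positivity of det (Xᵀ X)
  have hdetpos : 0 < (Xᵀ * X).det := by
    have hne : (Xᵀ * X).det ≠ 0 := by
      have hrk : (Xᵀ * X).rank = p := by rw [Matrix.rank_transpose_mul_self, hX]
      have htop : LinearMap.range (Xᵀ * X).mulVecLin = ⊤ := by
        apply Submodule.eq_top_of_finrank_eq
        rw [Module.finrank_fintype_fun_eq_card, Fintype.card_fin]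
        exact hrk
      have hsurj : Function.Surjective (Xᵀ * X).mulVecLin :=
        LinearMap.range_eq_top.mp htop
      have hinj : Function.Injective (Xᵀ * X).mulVecLin :=
        (LinearMap.injective_iff_surjective).mpr hsurj
      intro hd
      obtain ⟨v, hv0, hv⟩ := (Matrix.exists_mulVec_eq_zero_iff).mpr hd
      refine hv0 (hinj ?_)
      show (Xᵀ * X).mulVec v = (Xᵀ * X).mulVec 0
      rw [hv, Matrix.mulVec_zero]
    have hnn : 0 ≤ (Xᵀ * X).det := by
      rw [hIdet]; exact Finset.sum_nonneg fun S _ => sq_nonneg _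
    exact lt_of_le_of_ne hnn (Ne.symm hne)
  -- the inequality
  have hineq : (Xᵀ * Γ * X).det ≤ C * (Xᵀ * X).det := by
    rw [hΓdet, hIdet, Finset.mul_sum]
    refine Finset.sum_le_sum fun S hS => ?_
    exact mul_le_mul_of_nonneg_right (hprodle S hS) (sq_nonneg _)
  constructor
  · rw [div_le_iff₀ hdetpos]
    exact hineq
  -- equality case
  · intro hrange
    -- rows of X below p vanish
    have hrow : ∀ k : Fin n, p ≤ (k : ℕ) → ∀ i, X k i = 0 := by
      intro k hk i
      have hcol : X.mulVec (Pi.single i 1) ∈ LinearMap.range X.mulVecLin :=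
        ⟨Pi.single i 1, rfl⟩
      rw [hrange] at hcol
      set U : Submodule ℝ (Fin n → ℝ) :=
        { carrier := {v | ∀ m : Fin n, p ≤ (m : ℕ) → v m = 0}
          add_mem' := fun ha hb m hm => by
            simp only [Set.mem_setOf_eq] at ha hb ⊢
            rw [Pi.add_apply, ha m hm, hb m hm, add_zero]
          zero_mem' := fun m _ => rfl
          smul_mem' := fun c v hv m hm => by
            simp only [Set.mem_setOf_eq] at hv ⊢
            rw [Pi.smul_apply, hv m hm, smul_zero] } with hU
      have hsub : Submodule.span ℝ (Set.range fun i : Fin p =>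
          (Pi.single (Fin.castLE hpn i) 1 : Fin n → ℝ)) ≤ U := by
        rw [Submodule.span_le]
        rintro _ ⟨j, rfl⟩
        intro m hm
        apply Pi.single_eq_of_ne
        intro hmj
        rw [hmj] at hm
        exact absurd j.isLt (not_lt.mpr hm)
      have hXk : X.mulVec (Pi.single i 1) k = 0 := hsub hcol k hk
      have : X.mulVec (Pi.single i 1) k = X k i := by
        simp only [Matrix.mulVec, dotProduct]
        rw [Finset.sum_eq_single i (fun b _ hb => by rw [Pi.single_eq_of_ne hb, mul_zero])
          (fun h => absurd (Finset.mem_univ i) h), Pi.single_eq_same, mul_one]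
      rw [this] at hXk
      exact hXk
    -- off-support submatrices have zero determinant
    have hzero : ∀ S ∈ univ.powersetCard p, S ≠ F₀ →
        (X.submatrix (monoEnum hpn hp S) id).det = 0 := by
      intro S hS hSne
      rw [Finset.mem_powersetCard_univ] at hS
      have hnotsub : ¬ S ⊆ F₀ := by
        intro hsub
        exact hSne (Finset.eq_of_subset_of_card_le hsub (by rw [hF₀card, hS]))
      obtain ⟨k, hkS, hkF⟩ := Finset.not_subset.mp hnotsub
      have hk : p ≤ (k : ℕ) := by
        simp only [hF₀, Finset.mem_filter, Finset.mem_univ, true_and, not_lt] at hkF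
        exact hkF
      have hkrange : ∃ i : Fin p, monoEnum hpn hp S i = k := by
        rw [monoEnum_eq hpn hp hS]
        have : k ∈ Set.range (S.orderEmbOfFin hS) := by
          rw [Finset.range_orderEmbOfFin]; exact hkS
        exact this
      obtain ⟨i, hi⟩ := hkrange
      apply Matrix.det_eq_zero_of_row_eq_zero i
      intro j
      simp only [Matrix.submatrix_apply, id_eq, hi]
      exact hrow k hk j
    have hF₀mem : F₀ ∈ univ.powersetCard p := by
      rw [Finset.mem_powersetCard_univ]; exact hF₀card
    set D0 := (X.submatrix (monoEnum hpn hp F₀) id).det with hD0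
    have hsum1 : (Xᵀ * X).det = D0 ^ 2 := by
      rw [hIdet]
      rw [Finset.sum_eq_single F₀ (fun S hS hSne => by rw [hzero S hS hSne]; ring)
        (fun h => absurd hF₀mem h)]
    have hsum2 : (Xᵀ * Γ * X).det = C * D0 ^ 2 := by
      rw [hΓdet]
      rw [Finset.sum_eq_single F₀ (fun S hS hSne => by rw [hzero S hS hSne]; ring)
        (fun h => absurd hF₀mem h)]
    rw [hsum1, hsum2, mul_div_assoc, div_self (by rw [← hsum1]; exact ne_of_gt hdetpos),
      mul_one]
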